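/- Let α = 1 − c(1−p), p̃ = p/α, and let π^{(p̃)} be the stationary distribution of the chain with parameters (p̃, c). Then for all x < y in ℤ₊, the conditional law P_{x,y}(X_t ∈ · | ξ > t) under the coupling converges in distribution to π^{(p̃)} as t → ∞, i.e. for every j ∈ ℤ₊, lim_{t→∞} P_{x,y}(X_t = j | ξ > t) = π^{(p̃)}(j). -/

import Mathlib

open scoped BigOperators
open Filter

noncomputable section

/-- Probability mass function of a Binomial(n, ε) random variable, evaluated at k. -/
def binomPMF (n : ℕ) (ε : ℝ) (k : ℕ) : ℝ :=
  if k ≤ n then (n.choose k : ℝ) * ε ^ k * (1 - ε) ^ (n - k) else 0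

/-- Transition function `p^{p,c}` of the random walk with binomial catastrophes:
`p^{p,c}(i, i+1) = p` and `p^{p,c}(i, j) = (1-p) C(i,j) (1-c)^j c^(i-j)` for `j ≤ i`. -/
def stepFn (p c : ℝ) (i j : ℕ) : ℝ :=
  (if j = i + 1 then p else 0) + (if j ≤ i then (1 - p) * binomPMF i (1 - c) j else 0)

/-- `law p c x t j = P_x(X_t = j)`, the time-`t` distribution of the chain started at `x`. -/
def law (p c : ℝ) (x : ℕ) : ℕ → ℕ → ℝ
  | 0, j => if j = x then 1 else 0
  | t + 1, j => ∑' i, law p c x t i * stepFn p c i j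

/-- Mass that a probability mass function assigns to a set `A ⊆ ℕ`. -/
def massOf (q : ℕ → ℝ) (A : Set ℕ) : ℝ := ∑' j, A.indicator q j

/-- Total variation distance between two distributions on ℕ (given by their pmfs):
the maximum over subsets `A ⊆ ℕ` of `|Q₁(A) - Q₂(A)|`. -/
def tvDist (q₁ q₂ : ℕ → ℝ) : ℝ := ⨆ A : Set ℕ, |massOf q₁ A - massOf q₂ A|

/-- One-step transition of the coupling `(X_t, H_t)`: from `(u, h)`, with probability `p`
move to `(u+1, h)`, with probability `1-p` move to independent binomial thinnings. -/
def cstep (p c : ℝ) (s s' : ℕ × ℕ) : ℝ :=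
  (if s' = (s.1 + 1, s.2) then p else 0) +
    (1 - p) * binomPMF s.1 (1 - c) s'.1 * binomPMF s.2 (1 - c) s'.2

/-- `slaw p c x h t s = P_{(x,h)}((X_t, H_t) = s, ξ > t)` where `ξ = inf{t ≥ 0 : H_t = 0}`,
i.e. the law at time `t` of the coupling started at `(x, h)` killed when `H` hits `0`. -/
def slaw (p c : ℝ) (x h : ℕ) : ℕ → ℕ × ℕ → ℝ
  | 0, s => if s = (x, h) ∧ s.2 ≠ 0 then 1 else 0
  | t + 1, s => if s.2 = 0 then 0 else ∑' s' : ℕ × ℕ, slaw p c x h t s' * cstep p c s' s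


open Finset

lemma binomPMF_nonneg {ε : ℝ} (h0 : 0 ≤ ε) (h1 : ε ≤ 1) (n k : ℕ) : 0 ≤ binomPMF n ε k := by
  unfold binomPMF
  split
  · have : (0:ℝ) ≤ 1 - ε := by linarith
    positivity
  · exact le_refl 0

lemma binomPMF_of_gt {ε : ℝ} {n k : ℕ} (h : n < k) : binomPMF n ε k = 0 := by
  unfold binomPMF; rw [if_neg (by omega)]

lemma binomPMF_eq_coeff (n : ℕ) (ε : ℝ) (k : ℕ) :
    binomPMF n ε k = ((Polynomial.X + Polynomial.C (1 - ε)) ^ n).coeff k * ε ^ k := by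
  rw [Polynomial.coeff_X_add_C_pow]
  unfold binomPMF
  by_cases h : k ≤ n
  · rw [if_pos h]; ring
  · rw [if_neg h, Nat.choose_eq_zero_of_lt (by omega)]; simp

lemma sum_binomPMF (n : ℕ) (ε : ℝ) : ∑ k ∈ range (n + 1), binomPMF n ε k = 1 := by
  have h := add_pow ε (1 - ε) n
  have : ∑ k ∈ range (n + 1), binomPMF n ε k
      = ∑ k ∈ range (n + 1), ε ^ k * (1 - ε) ^ (n - k) * (n.choose k : ℝ) := by
    refine Finset.sum_congr rfl fun k hk => ?_
    rw [mem_range] at hk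
    unfold binomPMF
    rw [if_pos (by omega)]; ring
  rw [this, ← h]
  norm_num


lemma binomPMF_vandermonde (n m : ℕ) (ε : ℝ) (j : ℕ) :
    ∑ a ∈ range (j + 1), binomPMF n ε a * binomPMF m ε (j - a) = binomPMF (n + m) ε j := by
  have key : ((Polynomial.X + Polynomial.C (1 - ε)) ^ (n + m)).coeff j
      = ∑ a ∈ range (j + 1),
        ((Polynomial.X + Polynomial.C (1 - ε)) ^ n).coeff a *
          ((Polynomial.X + Polynomial.C (1 - ε)) ^ m).coeff (j - a) := by
    rw [pow_add, Polynomial.coeff_mul, Finset.Nat.sum_antidiagonal_eq_sum_range_succ_mk]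
  rw [binomPMF_eq_coeff (n + m), key, Finset.sum_mul]
  refine Finset.sum_congr rfl fun a ha => ?_
  rw [mem_range] at ha
  rw [binomPMF_eq_coeff, binomPMF_eq_coeff]
  have h2 : ε ^ a * ε ^ (j - a) = ε ^ j := by
    rw [← pow_add]; congr 1; omega
  calc ((Polynomial.X + Polynomial.C (1 - ε)) ^ n).coeff a * ε ^ a *
      (((Polynomial.X + Polynomial.C (1 - ε)) ^ m).coeff (j - a) * ε ^ (j - a))
      = ((Polynomial.X + Polynomial.C (1 - ε)) ^ n).coeff a *
        ((Polynomial.X + Polynomial.C (1 - ε)) ^ m).coeff (j - a) * (ε ^ a * ε ^ (j - a)) := by ring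
    _ = _ := by rw [h2]

lemma binomPMF_zero (n : ℕ) (ε : ℝ) : binomPMF n ε 0 = (1 - ε) ^ n := by
  unfold binomPMF; simp

lemma sum_binomPMF_choose (n m : ℕ) (ε : ℝ) :
    ∑ k ∈ range (n + 1), binomPMF n ε k * (k.choose m : ℝ)
      = (n.choose m : ℝ) * ε ^ m := by
  have hsum : ∀ N : ℕ, ∑ k ∈ range (N + 1), binomPMF N ε k = 1 := by
    intro N
    have h := add_pow ε (1 - ε) N
    have h2 : ∑ k ∈ range (N + 1), binomPMF N ε k
        = ∑ k ∈ range (N + 1), ε ^ k * (1 - ε) ^ (N - k) * (N.choose k : ℝ) := by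
      refine Finset.sum_congr rfl fun k hk => ?_
      rw [mem_range] at hk
      unfold binomPMF
      rw [if_pos (by omega)]; ring
    rw [h2, ← h]; norm_num
  by_cases hmn : m ≤ n
  · have h1 : ∑ k ∈ range (n + 1), binomPMF n ε k * (k.choose m : ℝ)
        = ∑ k ∈ Ico m (n + 1), binomPMF n ε k * (k.choose m : ℝ) := by
      refine (Finset.sum_subset ?_ ?_).symm
      · intro k hk; rw [mem_Ico] at hk; rw [mem_range]; omega
      · intro k hk hk2
        rw [mem_range] at hk; rw [mem_Ico] at hk2
        have : k < m := by omega
        rw [Nat.choose_eq_zero_of_lt this]; simp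
    rw [h1, Finset.sum_Ico_eq_sum_range]
    have hnm : n + 1 - m = (n - m) + 1 := by omega
    rw [hnm]
    have h2 : ∀ j ∈ range ((n - m) + 1),
        binomPMF n ε (m + j) * ((m + j).choose m : ℝ)
          = (n.choose m : ℝ) * ε ^ m * binomPMF (n - m) ε j := by
      intro j hj
      rw [mem_range] at hj
      have hj' : j ≤ n - m := by omega
      unfold binomPMF
      rw [if_pos (by omega), if_pos hj']
      have hcc : (n.choose (m + j) : ℝ) * ((m + j).choose m : ℝ)
          = (n.choose m : ℝ) * ((n - m).choose j : ℝ) := by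
        have := Nat.choose_mul (n := n) (k := m + j) (s := m) (by omega)
        have h3 : m + j - m = j := by omega
        rw [h3] at this
        exact_mod_cast congrArg (Nat.cast (R := ℝ)) this
      have hpow : ε ^ (m + j) = ε ^ m * ε ^ j := by rw [pow_add]
      have hsub : n - (m + j) = (n - m) - j := by omega
      rw [hsub, hpow]
      calc (n.choose (m + j) : ℝ) * (ε ^ m * ε ^ j) * (1 - ε) ^ (n - m - j) * ((m + j).choose m : ℝ)
          = ((n.choose (m + j) : ℝ) * ((m + j).choose m : ℝ)) * (ε ^ m * ε ^ j) * (1 - ε) ^ (n - m - j) := by ring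
        _ = ((n.choose m : ℝ) * ((n - m).choose j : ℝ)) * (ε ^ m * ε ^ j) * (1 - ε) ^ (n - m - j) := by rw [hcc]
        _ = (n.choose m : ℝ) * ε ^ m * ((n - m).choose j * ε ^ j * (1 - ε) ^ (n - m - j)) := by ring
    rw [Finset.sum_congr rfl h2, ← Finset.mul_sum, hsum (n - m), mul_one]
  · have h1 : ∀ k ∈ range (n + 1), binomPMF n ε k * (k.choose m : ℝ) = 0 := by
      intro k hk
      rw [mem_range] at hk
      rw [Nat.choose_eq_zero_of_lt (by omega)]; simp
    rw [Finset.sum_congr rfl h1, Finset.sum_const, Nat.choose_eq_zero_of_lt (by omega)]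
    simp


lemma stepFn_eq (q c : ℝ) (i j : ℕ) :
    stepFn q c i j = (if j = i + 1 then q else 0) + (1 - q) * binomPMF i (1 - c) j := by
  unfold stepFn
  congr 1
  by_cases h : j ≤ i
  · rw [if_pos h]
  · rw [if_neg h, binomPMF_of_gt (by omega), mul_zero]

lemma stepFn_nonneg {q c : ℝ} (hq0 : 0 ≤ q) (hq1 : q ≤ 1) (hc0 : 0 ≤ c) (hc1 : c ≤ 1)
    (i j : ℕ) : 0 ≤ stepFn q c i j := by
  rw [stepFn_eq]
  have hb := binomPMF_nonneg (ε := 1 - c) (by linarith) (by linarith) i j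
  have : (0:ℝ) ≤ 1 - q := by linarith
  positivity

lemma stepFn_of_gt {q c : ℝ} {i j : ℕ} (h : i + 1 < j) : stepFn q c i j = 0 := by
  rw [stepFn_eq, if_neg (by omega), binomPMF_of_gt (by omega), mul_zero, add_zero]

lemma sum_stepFn (q c : ℝ) (i : ℕ) : ∑ j ∈ range (i + 2), stepFn q c i j = 1 := by
  have h1 : ∑ j ∈ range (i + 2), stepFn q c i j
      = (∑ j ∈ range (i + 2), if j = i + 1 then q else 0)
        + ∑ j ∈ range (i + 2), (1 - q) * binomPMF i (1 - c) j := by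
    rw [← Finset.sum_add_distrib]
    exact Finset.sum_congr rfl fun j _ => stepFn_eq q c i j
  rw [h1, Finset.sum_ite_eq' (range (i + 2)) (i + 1) (fun _ => q),
    if_pos (by simp), ← Finset.mul_sum, Finset.sum_range_succ,
    binomPMF_of_gt (by omega), add_zero, sum_binomPMF]
  ring

lemma law_zero_def (q c : ℝ) (x j : ℕ) : law q c x 0 j = if j = x then 1 else 0 := rfl
lemma law_succ_def (q c : ℝ) (x t j : ℕ) :
    law q c x (t + 1) j = ∑' i, law q c x t i * stepFn q c i j := rfl

lemma law_eq_zero_of_gt (q c : ℝ) (x : ℕ) :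
    ∀ t j, x + t < j → law q c x t j = 0 := by
  intro t
  induction t with
  | zero => intro j hj; rw [law_zero_def, if_neg (by omega)]
  | succ t ih =>
    intro j hj
    rw [law_succ_def]
    have h : ∀ i : ℕ, law q c x t i * stepFn q c i j = 0 := by
      intro i
      by_cases h2 : x + t < i
      · rw [ih i h2, zero_mul]
      · rw [stepFn_of_gt (by omega), mul_zero]
    rw [tsum_congr h, tsum_zero]

lemma law_succ_sum (q c : ℝ) (x t j : ℕ) :
    law q c x (t + 1) j = ∑ i ∈ range (x + t + 1), law q c x t i * stepFn q c i j := by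
  rw [law_succ_def]
  refine tsum_eq_sum fun i hi => ?_
  rw [mem_range] at hi
  rw [law_eq_zero_of_gt q c x t i (by omega), zero_mul]

lemma law_nonneg {q c : ℝ} (hq0 : 0 ≤ q) (hq1 : q ≤ 1) (hc0 : 0 ≤ c) (hc1 : c ≤ 1)
    (x : ℕ) : ∀ t j, 0 ≤ law q c x t j := by
  intro t
  induction t with
  | zero => intro j; rw [law_zero_def]; positivity
  | succ t ih =>
    intro j
    rw [law_succ_sum]
    exact Finset.sum_nonneg fun i _ =>
      mul_nonneg (ih i) (stepFn_nonneg hq0 hq1 hc0 hc1 i j)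

lemma sum_law (q c : ℝ) (x : ℕ) : ∀ t, ∑ j ∈ range (x + t + 1), law q c x t j = 1 := by
  intro t
  induction t with
  | zero =>
    have : ∀ j ∈ range (x + 0 + 1), law q c x 0 j = if j = x then 1 else 0 :=
      fun j _ => rfl
    rw [Finset.sum_congr rfl this, Finset.sum_ite_eq' (range (x + 0 + 1)) x (fun _ => (1:ℝ)),
      if_pos (by simp)]
  | succ t ih =>
    have h1 : ∀ j ∈ range (x + (t+1) + 1), law q c x (t+1) j
        = ∑ i ∈ range (x + t + 1), law q c x t i * stepFn q c i j :=
      fun j _ => law_succ_sum q c x t j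
    rw [Finset.sum_congr rfl h1, Finset.sum_comm]
    have h2 : ∀ i ∈ range (x + t + 1),
        ∑ j ∈ range (x + (t+1) + 1), law q c x t i * stepFn q c i j = law q c x t i := by
      intro i hi
      rw [mem_range] at hi
      rw [← Finset.mul_sum]
      have h3 : ∑ j ∈ range (x + (t+1) + 1), stepFn q c i j
          = ∑ j ∈ range (i + 2), stepFn q c i j := by
        refine (Finset.sum_subset ?_ ?_).symm
        · intro j hj; rw [mem_range] at *; omega
        · intro j _ hj2; rw [mem_range] at hj2; exact stepFn_of_gt (by omega)
      rw [h3, sum_stepFn, mul_one]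
    rw [Finset.sum_congr rfl h2, ih]

lemma law_le_one {q c : ℝ} (hq0 : 0 ≤ q) (hq1 : q ≤ 1) (hc0 : 0 ≤ c) (hc1 : c ≤ 1)
    (x t j : ℕ) : law q c x t j ≤ 1 := by
  by_cases h : j ∈ range (x + t + 1)
  · calc law q c x t j ≤ ∑ i ∈ range (x + t + 1), law q c x t i :=
        Finset.single_le_sum (fun i _ => law_nonneg hq0 hq1 hc0 hc1 x t i) h
      _ = 1 := sum_law q c x t
  · rw [mem_range] at h
    rw [law_eq_zero_of_gt q c x t j (by omega)]; norm_num

lemma summable_law (q c : ℝ) (x t : ℕ) : Summable (law q c x t) :=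
  summable_of_ne_finset_zero (s := range (x + t + 1)) fun j hj => by
    rw [mem_range] at hj; exact law_eq_zero_of_gt q c x t j (by omega)

lemma tsum_law (q c : ℝ) (x t : ℕ) : ∑' j, law q c x t j = 1 := by
  rw [tsum_eq_sum (s := range (x + t + 1)) fun j hj => by
    rw [mem_range] at hj; exact law_eq_zero_of_gt q c x t j (by omega)]
  exact sum_law q c x t


def jlaw (q c : ℝ) (x h : ℕ) : ℕ → ℕ × ℕ → ℝ
  | 0, s => if s = (x, h) then 1 else 0
  | t + 1, s => ∑' s' : ℕ × ℕ, jlaw q c x h t s' * cstep q c s' s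

lemma jlaw_zero_def (q c : ℝ) (x h : ℕ) (s : ℕ × ℕ) :
    jlaw q c x h 0 s = if s = (x, h) then 1 else 0 := rfl
lemma jlaw_succ_def (q c : ℝ) (x h t : ℕ) (s : ℕ × ℕ) :
    jlaw q c x h (t + 1) s = ∑' s' : ℕ × ℕ, jlaw q c x h t s' * cstep q c s' s := rfl

lemma cstep_nonneg {q c : ℝ} (hq0 : 0 ≤ q) (hq1 : q ≤ 1) (hc0 : 0 ≤ c) (hc1 : c ≤ 1)
    (s s' : ℕ × ℕ) : 0 ≤ cstep q c s s' := by
  unfold cstep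
  have h1 := binomPMF_nonneg (ε := 1 - c) (by linarith) (by linarith) s.1 s'.1
  have h2 := binomPMF_nonneg (ε := 1 - c) (by linarith) (by linarith) s.2 s'.2
  have h3 : (0:ℝ) ≤ 1 - q := by linarith
  have h4 : (0:ℝ) ≤ if s' = (s.1 + 1, s.2) then q else 0 := by positivity
  positivity

lemma cstep_eq_zero {q c : ℝ} {s s' : ℕ × ℕ} (h : s.1 + 1 < s'.1 ∨ s.2 < s'.2) :
    cstep q c s s' = 0 := by
  unfold cstep
  have h1 : s' ≠ (s.1 + 1, s.2) := by
    intro he; rw [he] at h; exact absurd h (by simp)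
  rw [if_neg h1]
  rcases h with h | h
  · rw [binomPMF_of_gt (n := s.1) (k := s'.1) (by omega)]; ring
  · rw [binomPMF_of_gt (n := s.2) (k := s'.2) (by omega)]; ring

lemma jlaw_support (q c : ℝ) (x h : ℕ) :
    ∀ t s, (x + t < s.1 ∨ h < s.2) → jlaw q c x h t s = 0 := by
  intro t
  induction t with
  | zero =>
    intro s hs
    rw [jlaw_zero_def, if_neg]
    intro he; rw [he] at hs
    simp only [Prod.fst, Prod.snd] at hs
    omega

  | succ t ih =>
    intro s hs
    rw [jlaw_succ_def]
    have hz : ∀ s' : ℕ × ℕ, jlaw q c x h t s' * cstep q c s' s = 0 := by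
      intro s'
      by_cases h1 : x + t < s'.1 ∨ h < s'.2
      · rw [ih s' h1, zero_mul]
      · push_neg at h1
        rw [cstep_eq_zero (by omega), mul_zero]
    rw [tsum_congr hz, tsum_zero]

lemma jlaw_succ_sum (q c : ℝ) (x h t : ℕ) (s : ℕ × ℕ) :
    jlaw q c x h (t + 1) s
      = ∑ s' ∈ range (x + t + 1) ×ˢ range (h + 1), jlaw q c x h t s' * cstep q c s' s := by
  rw [jlaw_succ_def]
  refine tsum_eq_sum fun s' hs' => ?_
  rw [Finset.mem_product, mem_range, mem_range] at hs'
  rw [jlaw_support q c x h t s' (by omega), zero_mul]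

lemma jlaw_nonneg {q c : ℝ} (hq0 : 0 ≤ q) (hq1 : q ≤ 1) (hc0 : 0 ≤ c) (hc1 : c ≤ 1)
    (x h : ℕ) : ∀ t s, 0 ≤ jlaw q c x h t s := by
  intro t
  induction t with
  | zero => intro s; rw [jlaw_zero_def]; positivity
  | succ t ih =>
    intro s
    rw [jlaw_succ_sum]
    exact Finset.sum_nonneg fun s' _ =>
      mul_nonneg (ih s') (cstep_nonneg hq0 hq1 hc0 hc1 s' s)

lemma slaw_snd_zero (q c : ℝ) (x h t : ℕ) (s : ℕ × ℕ) (hs : s.2 = 0) :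
    slaw q c x h t s = 0 := by
  cases t with
  | zero =>
    show (if s = (x, h) ∧ s.2 ≠ 0 then (1:ℝ) else 0) = 0
    rw [if_neg]; tauto
  | succ t =>
    show (if s.2 = 0 then (0:ℝ) else _) = 0
    rw [if_pos hs]

lemma slaw_eq_jlaw (q c : ℝ) (x h : ℕ) (hh : h ≠ 0) :
    ∀ t s, s.2 ≠ 0 → slaw q c x h t s = jlaw q c x h t s := by
  intro t
  induction t with
  | zero =>
    intro s hs
    show (if s = (x, h) ∧ s.2 ≠ 0 then (1:ℝ) else 0) = if s = (x, h) then 1 else 0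
    by_cases he : s = (x, h)
    · rw [if_pos ⟨he, hs⟩, if_pos he]
    · rw [if_neg (by tauto), if_neg he]
  | succ t ih =>
    intro s hs
    show (if s.2 = 0 then (0:ℝ) else ∑' s', slaw q c x h t s' * cstep q c s' s)
        = ∑' s', jlaw q c x h t s' * cstep q c s' s
    rw [if_neg hs]
    refine tsum_congr fun s' => ?_
    by_cases h1 : s'.2 = 0
    · rw [slaw_snd_zero q c x h t s' h1, cstep_eq_zero (Or.inr (by omega))]; simp
    · rw [ih s' h1]

lemma slaw_nonneg {q c : ℝ} (hq0 : 0 ≤ q) (hq1 : q ≤ 1) (hc0 : 0 ≤ c) (hc1 : c ≤ 1)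
    (x h : ℕ) (hh : h ≠ 0) (t : ℕ) (s : ℕ × ℕ) : 0 ≤ slaw q c x h t s := by
  by_cases h1 : s.2 = 0
  · rw [slaw_snd_zero q c x h t s h1]
  · rw [slaw_eq_jlaw q c x h hh t s h1]
    exact jlaw_nonneg hq0 hq1 hc0 hc1 x h t s

lemma slaw_support (q c : ℝ) (x h : ℕ) (hh : h ≠ 0) (t : ℕ) (s : ℕ × ℕ)
    (hs : x + t < s.1 ∨ h < s.2) : slaw q c x h t s = 0 := by
  by_cases h1 : s.2 = 0
  · exact slaw_snd_zero q c x h t s h1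
  · rw [slaw_eq_jlaw q c x h hh t s h1]
    exact jlaw_support q c x h t s hs


lemma slaw_succ_sum (q c : ℝ) (x h : ℕ) (hh : h ≠ 0) (t : ℕ) (s : ℕ × ℕ) :
    slaw q c x h (t + 1) s
      = if s.2 = 0 then 0 else
          ∑ s' ∈ range (x + t + 1) ×ˢ range (h + 1), slaw q c x h t s' * cstep q c s' s := by
  show (if s.2 = 0 then (0:ℝ) else ∑' s', slaw q c x h t s' * cstep q c s' s) = _
  by_cases hs : s.2 = 0
  · rw [if_pos hs, if_pos hs]
  · rw [if_neg hs, if_neg hs]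
    refine tsum_eq_sum fun s' hs' => ?_
    rw [Finset.mem_product, mem_range, mem_range] at hs'
    rw [slaw_support q c x h hh t s' (by omega), zero_mul]

lemma slaw_choose_moment (p c : ℝ) (hp0 : 0 < p) (hp1 : p < 1) (hc1 : c ≤ 1)
    (x h0 : ℕ) (hh : h0 ≠ 0) (m : ℕ) (hm : 1 ≤ m) :
    ∀ t u, ∑ h' ∈ range (h0 + 1), slaw p c x h0 t (u, h') * (h'.choose m : ℝ)
      = (h0.choose m : ℝ) * (p + (1 - p) * (1 - c) ^ m) ^ t
          * law (p / (p + (1 - p) * (1 - c) ^ m)) c x t u := by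
  set α : ℝ := p + (1 - p) * (1 - c) ^ m with hα
  have hαpos : 0 < α := by
    have h1 : (0:ℝ) ≤ (1 - p) * (1 - c) ^ m := by
      have : (0:ℝ) ≤ 1 - c := by linarith
      have : (0:ℝ) ≤ 1 - p := by linarith
      positivity
    linarith
  set q' : ℝ := p / α with hq'
  have hαq' : α * q' = p := by rw [hq', mul_div_assoc']; exact mul_div_cancel_left₀ p hαpos.ne'
  have hαq'' : α * (1 - q') = (1 - p) * (1 - c) ^ m := by
    have : α * (1 - q') = α - α * q' := by ring
    rw [this, hαq']; ring
  intro t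
  induction t with
  | zero =>
    intro u
    have hterm : ∀ h' ∈ range (h0 + 1),
        slaw p c x h0 0 (u, h') * (h'.choose m : ℝ)
          = if h' = h0 then (if u = x then (h0.choose m : ℝ) else 0) else 0 := by
      intro h' _
      show (if (u, h') = (x, h0) ∧ h' ≠ 0 then (1:ℝ) else 0) * (h'.choose m : ℝ) = _
      by_cases h1 : h' = h0
      · subst h1
        by_cases h2 : u = x
        · subst h2
          rw [if_pos ⟨rfl, hh⟩, if_pos rfl, if_pos rfl, one_mul]
        · rw [if_neg (by simp [Prod.ext_iff]; tauto), if_pos rfl, if_neg h2, zero_mul]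
      · rw [if_neg (by simp [Prod.ext_iff]; tauto), if_neg h1, zero_mul]
    rw [Finset.sum_congr rfl hterm, Finset.sum_ite_eq' (range (h0 + 1)) h0, if_pos (by simp)]
    show _ = (h0.choose m : ℝ) * 1 * (if u = x then 1 else 0)
    by_cases h2 : u = x <;> simp [h2]
  | succ t ih =>
    intro u
    have hterm : ∀ h' ∈ range (h0 + 1),
        slaw p c x h0 (t + 1) (u, h') * (h'.choose m : ℝ)
          = ∑ s' ∈ range (x + t + 1) ×ˢ range (h0 + 1),
              slaw p c x h0 t s' * cstep p c s' (u, h') * (h'.choose m : ℝ) := by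
      intro h' _
      rw [slaw_succ_sum p c x h0 hh t (u, h'), ← Finset.sum_mul]
      by_cases h1 : h' = 0
      · subst h1
        rw [if_pos rfl, Nat.choose_eq_zero_of_lt (by omega)]
        simp
      · rw [if_neg h1]
    rw [Finset.sum_congr rfl hterm, Finset.sum_comm]
    have hinner : ∀ s' ∈ range (x + t + 1) ×ˢ range (h0 + 1),
        ∑ h' ∈ range (h0 + 1), slaw p c x h0 t s' * cstep p c s' (u, h') * (h'.choose m : ℝ)
          = slaw p c x h0 t s' * ((s'.2.choose m : ℝ) * (α * stepFn q' c s'.1 u)) := by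
      intro s' hs'
      rw [Finset.mem_product, mem_range, mem_range] at hs'
      have hrw : ∀ h' ∈ range (h0 + 1),
          slaw p c x h0 t s' * cstep p c s' (u, h') * (h'.choose m : ℝ)
            = slaw p c x h0 t s' *
              ((if h' = s'.2 then (if u = s'.1 + 1 then p * (s'.2.choose m : ℝ) else 0) else 0)
                + (1 - p) * binomPMF s'.1 (1 - c) u * (binomPMF s'.2 (1 - c) h' * (h'.choose m : ℝ))) := by
        intro h' _
        unfold cstep
        have hup : (if (u, h') = (s'.1 + 1, s'.2) then p else 0) * (h'.choose m : ℝ)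
            = if h' = s'.2 then (if u = s'.1 + 1 then p * (s'.2.choose m : ℝ) else 0) else 0 := by
          by_cases e1 : h' = s'.2
          · subst e1
            by_cases e2 : u = s'.1 + 1
            · subst e2; rw [if_pos rfl, if_pos rfl, if_pos rfl]
            · rw [if_neg (by simp [Prod.ext_iff]; tauto), if_pos rfl, if_neg e2, zero_mul]
          · rw [if_neg (by simp [Prod.ext_iff]; tauto), if_neg e1, zero_mul]
        calc slaw p c x h0 t s' *
            ((if (u, h') = (s'.1 + 1, s'.2) then p else 0)
              + (1 - p) * binomPMF s'.1 (1 - c) u * binomPMF s'.2 (1 - c) h') * (h'.choose m : ℝ)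
            = slaw p c x h0 t s' *
              ((if (u, h') = (s'.1 + 1, s'.2) then p else 0) * (h'.choose m : ℝ)
                + (1 - p) * binomPMF s'.1 (1 - c) u * (binomPMF s'.2 (1 - c) h' * (h'.choose m : ℝ))) := by
              ring
          _ = _ := by rw [hup]
      rw [Finset.sum_congr rfl hrw, ← Finset.mul_sum]
      congr 1
      rw [Finset.sum_add_distrib, Finset.sum_ite_eq' (range (h0 + 1)) s'.2,
        if_pos (by rw [mem_range]; omega), ← Finset.mul_sum]
      have hshrink : ∑ h' ∈ range (h0 + 1), binomPMF s'.2 (1 - c) h' * (h'.choose m : ℝ)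
          = ∑ h' ∈ range (s'.2 + 1), binomPMF s'.2 (1 - c) h' * (h'.choose m : ℝ) := by
        refine (Finset.sum_subset ?_ ?_).symm
        · intro k hk; rw [mem_range] at *; omega
        · intro k _ hk2; rw [mem_range] at hk2
          rw [binomPMF_of_gt (by omega), zero_mul]
      rw [hshrink, sum_binomPMF_choose]
      rw [stepFn_eq]
      have : α * ((if u = s'.1 + 1 then q' else 0) + (1 - q') * binomPMF s'.1 (1 - c) u)
          = (if u = s'.1 + 1 then α * q' else 0) + α * (1 - q') * binomPMF s'.1 (1 - c) u := by
        by_cases e2 : u = s'.1 + 1 <;> simp [e2] <;> ring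
      rw [this, hαq', hαq'']
      by_cases e2 : u = s'.1 + 1 <;> simp [e2] <;> ring
    rw [Finset.sum_congr rfl hinner]
    have hprod : ∑ s' ∈ range (x + t + 1) ×ˢ range (h0 + 1),
        slaw p c x h0 t s' * ((s'.2.choose m : ℝ) * (α * stepFn q' c s'.1 u))
          = ∑ u' ∈ range (x + t + 1), ∑ h' ∈ range (h0 + 1),
              slaw p c x h0 t (u', h') * ((h'.choose m : ℝ) * (α * stepFn q' c u' u)) :=
      Finset.sum_product _ _ _
    rw [hprod]
    have hcol : ∀ u' ∈ range (x + t + 1),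
        ∑ h' ∈ range (h0 + 1), slaw p c x h0 t (u', h') * ((h'.choose m : ℝ) * (α * stepFn q' c u' u))
          = ((h0.choose m : ℝ) * α ^ t * law q' c x t u') * (α * stepFn q' c u' u) := by
      intro u' _
      rw [← ih u']
      rw [Finset.sum_mul]
      exact Finset.sum_congr rfl fun h' _ => by ring
    rw [Finset.sum_congr rfl hcol, law_succ_sum]
    rw [Finset.mul_sum]
    refine Finset.sum_congr rfl fun u' _ => ?_
    rw [pow_succ]
    ring


lemma alt_choose_sum {h0 h' : ℕ} (h1 : 1 ≤ h') (h2 : h' ≤ h0) :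
    ∑ m ∈ Icc 1 h0, (-1:ℝ)^(m+1) * (h'.choose m : ℝ) = 1 := by
  have hz : ∑ i ∈ range (h' + 1), (-1:ℝ)^i * (h'.choose i : ℝ) = 0 := by
    have := Int.alternating_sum_range_choose (n := h')
    rw [if_neg (by omega)] at this
    have h3 : ((∑ i ∈ range (h' + 1), (-1:ℤ)^i * (h'.choose i : ℤ) : ℤ) : ℝ) = ((0:ℤ):ℝ) := by
      exact_mod_cast congrArg (fun z : ℤ => (z : ℝ)) this
    push_cast at h3
    exact h3
  have hshrink : ∑ m ∈ Icc 1 h0, (-1:ℝ)^(m+1) * (h'.choose m : ℝ)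
      = ∑ m ∈ Icc 1 h', (-1:ℝ)^(m+1) * (h'.choose m : ℝ) := by
    refine (Finset.sum_subset ?_ ?_).symm
    · intro k hk; rw [mem_Icc] at *; omega
    · intro k hk hk2; rw [mem_Icc] at *
      rw [Nat.choose_eq_zero_of_lt (by omega)]
      simp
  rw [hshrink]
  have hIco : Icc 1 h' = Ico 1 (h' + 1) := by
    ext k; simp [Nat.lt_succ_iff]
  rw [hIco, Finset.sum_Ico_eq_sum_range]
  rw [Finset.sum_range_succ'] at hz
  simp only [pow_zero, one_mul, Nat.choose_zero_right, Nat.cast_one] at hz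
  have h4 : ∑ i ∈ range (h' + 1 - 1), (-1:ℝ)^(1 + i + 1) * (h'.choose (1 + i) : ℝ)
      = ∑ i ∈ range h', (-1:ℝ)^(i+1) * (h'.choose (i+1) : ℝ) * (-1) := by
    have he : h' + 1 - 1 = h' := by omega
    rw [he]
    refine Finset.sum_congr rfl fun i _ => ?_
    have : 1 + i = i + 1 := by omega
    rw [this, pow_succ]
    ring
  rw [h4, ← Finset.sum_mul]
  have : ∑ i ∈ range h', (-1:ℝ)^(i+1) * (h'.choose (i+1) : ℝ) = -1 := by linarith
  rw [this]; ring

lemma num_formula (p c : ℝ) (hp0 : 0 < p) (hp1 : p < 1) (hc1 : c ≤ 1)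
    (x h0 : ℕ) (hh : h0 ≠ 0) (t u : ℕ) :
    ∑' h', slaw p c x h0 t (u, h')
      = ∑ m ∈ Icc 1 h0, (-1:ℝ)^(m+1) *
          ((h0.choose m : ℝ) * (p + (1 - p) * (1 - c) ^ m) ^ t
            * law (p / (p + (1 - p) * (1 - c) ^ m)) c x t u) := by
  have hts : ∑' h', slaw p c x h0 t (u, h')
      = ∑ h' ∈ range (h0 + 1), slaw p c x h0 t (u, h') := by
    refine tsum_eq_sum fun h' hh' => ?_
    rw [mem_range] at hh'
    exact slaw_support p c x h0 hh t (u, h') (Or.inr (by omega))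
  rw [hts]
  have hterm : ∀ h' ∈ range (h0 + 1),
      slaw p c x h0 t (u, h')
        = ∑ m ∈ Icc 1 h0, (-1:ℝ)^(m+1) * (slaw p c x h0 t (u, h') * (h'.choose m : ℝ)) := by
    intro h' hh'
    rw [mem_range] at hh'
    by_cases h1 : h' = 0
    · subst h1
      rw [slaw_snd_zero p c x h0 t (u, 0) rfl]
      simp
    · have : ∑ m ∈ Icc 1 h0, (-1:ℝ)^(m+1) * (slaw p c x h0 t (u, h') * (h'.choose m : ℝ))
          = slaw p c x h0 t (u, h') * ∑ m ∈ Icc 1 h0, (-1:ℝ)^(m+1) * (h'.choose m : ℝ) := by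
        rw [Finset.mul_sum]
        exact Finset.sum_congr rfl fun m _ => by ring
      rw [this, alt_choose_sum (by omega) (by omega), mul_one]
  rw [Finset.sum_congr rfl hterm, Finset.sum_comm]
  refine Finset.sum_congr rfl fun m hm => ?_
  rw [mem_Icc] at hm
  rw [← Finset.mul_sum, slaw_choose_moment p c hp0 hp1 hc1 x h0 hh m hm.1 t u]

lemma den_formula (p c : ℝ) (hp0 : 0 < p) (hp1 : p < 1) (hc1 : c ≤ 1)
    (x h0 : ℕ) (hh : h0 ≠ 0) (t : ℕ) :
    ∑' s : ℕ × ℕ, slaw p c x h0 t s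
      = ∑ m ∈ Icc 1 h0, (-1:ℝ)^(m+1) *
          ((h0.choose m : ℝ) * (p + (1 - p) * (1 - c) ^ m) ^ t) := by
  have hts : ∑' s : ℕ × ℕ, slaw p c x h0 t s
      = ∑ s ∈ range (x + t + 1) ×ˢ range (h0 + 1), slaw p c x h0 t s := by
    refine tsum_eq_sum fun s hs => ?_
    rw [Finset.mem_product, mem_range, mem_range] at hs
    exact slaw_support p c x h0 hh t s (by omega)
  rw [hts, Finset.sum_product]
  have hcol : ∀ u ∈ range (x + t + 1),
      ∑ h' ∈ range (h0 + 1), slaw p c x h0 t (u, h')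
        = ∑ m ∈ Icc 1 h0, (-1:ℝ)^(m+1) *
            ((h0.choose m : ℝ) * (p + (1 - p) * (1 - c) ^ m) ^ t
              * law (p / (p + (1 - p) * (1 - c) ^ m)) c x t u) := by
    intro u _
    rw [← num_formula p c hp0 hp1 hc1 x h0 hh t u]
    refine (tsum_eq_sum fun h' hh' => ?_).symm
    rw [mem_range] at hh'
    exact slaw_support p c x h0 hh t (u, h') (Or.inr (by omega))
  rw [Finset.sum_congr rfl hcol, Finset.sum_comm]
  refine Finset.sum_congr rfl fun m hm => ?_
  have : ∀ u ∈ range (x + t + 1),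
      (-1:ℝ)^(m+1) * ((h0.choose m : ℝ) * (p + (1 - p) * (1 - c) ^ m) ^ t
        * law (p / (p + (1 - p) * (1 - c) ^ m)) c x t u)
      = ((-1:ℝ)^(m+1) * ((h0.choose m : ℝ) * (p + (1 - p) * (1 - c) ^ m) ^ t))
        * law (p / (p + (1 - p) * (1 - c) ^ m)) c x t u := fun u _ => by ring
  rw [Finset.sum_congr rfl this, ← Finset.mul_sum, sum_law, mul_one]


lemma jlaw_marg1 (q c : ℝ) (x h : ℕ) :
    ∀ t u, ∑ h' ∈ range (h + 1), jlaw q c x h t (u, h') = law q c x t u := by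
  intro t
  induction t with
  | zero =>
    intro u
    have hterm : ∀ h' ∈ range (h + 1),
        jlaw q c x h 0 (u, h') = if h' = h then (if u = x then (1:ℝ) else 0) else 0 := by
      intro h' _
      show (if (u, h') = (x, h) then (1:ℝ) else 0) = _
      by_cases h1 : h' = h
      · subst h1
        by_cases h2 : u = x
        · subst h2; rw [if_pos rfl, if_pos rfl, if_pos rfl]
        · rw [if_neg (by simp [Prod.ext_iff]; tauto), if_pos rfl, if_neg h2]
      · rw [if_neg (by simp [Prod.ext_iff]; tauto), if_neg h1]
    rw [Finset.sum_congr rfl hterm, Finset.sum_ite_eq' (range (h + 1)) h, if_pos (by simp)]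
    rfl
  | succ t ih =>
    intro u
    have hterm : ∀ h' ∈ range (h + 1),
        jlaw q c x h (t + 1) (u, h')
          = ∑ s' ∈ range (x + t + 1) ×ˢ range (h + 1), jlaw q c x h t s' * cstep q c s' (u, h') :=
      fun h' _ => jlaw_succ_sum q c x h t (u, h')
    rw [Finset.sum_congr rfl hterm, Finset.sum_comm]
    have hinner : ∀ s' ∈ range (x + t + 1) ×ˢ range (h + 1),
        ∑ h' ∈ range (h + 1), jlaw q c x h t s' * cstep q c s' (u, h')
          = jlaw q c x h t s' * stepFn q c s'.1 u := by
      intro s' hs'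
      rw [Finset.mem_product, mem_range, mem_range] at hs'
      rw [← Finset.mul_sum]
      congr 1
      have hsplit : ∀ h' ∈ range (h + 1),
          cstep q c s' (u, h')
            = (if h' = s'.2 then (if u = s'.1 + 1 then q else 0) else 0)
              + (1 - q) * binomPMF s'.1 (1 - c) u * binomPMF s'.2 (1 - c) h' := by
        intro h' _
        unfold cstep
        congr 1
        by_cases e1 : h' = s'.2
        · subst e1
          by_cases e2 : u = s'.1 + 1
          · subst e2; rw [if_pos rfl, if_pos rfl, if_pos rfl]
          · rw [if_neg (by simp [Prod.ext_iff]; tauto), if_pos rfl, if_neg e2]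
        · rw [if_neg (by simp [Prod.ext_iff]; tauto), if_neg e1]
      rw [Finset.sum_congr rfl hsplit, Finset.sum_add_distrib,
        Finset.sum_ite_eq' (range (h + 1)) s'.2, if_pos (by rw [mem_range]; omega),
        ← Finset.mul_sum]
      have hshrink : ∑ h' ∈ range (h + 1), binomPMF s'.2 (1 - c) h'
          = ∑ h' ∈ range (s'.2 + 1), binomPMF s'.2 (1 - c) h' := by
        refine (Finset.sum_subset ?_ ?_).symm
        · intro k hk; rw [mem_range] at *; omega
        · intro k _ hk2; rw [mem_range] at hk2
          exact binomPMF_of_gt (by omega)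
      rw [hshrink, sum_binomPMF, mul_one, stepFn_eq]
    rw [Finset.sum_congr rfl hinner, Finset.sum_product]
    have hcol : ∀ u' ∈ range (x + t + 1),
        ∑ h' ∈ range (h + 1), jlaw q c x h t (u', h') * stepFn q c u' u
          = law q c x t u' * stepFn q c u' u := by
      intro u' _
      rw [← Finset.sum_mul, ih u']
    rw [Finset.sum_congr rfl hcol, ← law_succ_sum]

lemma binom_conv_sum (n m N M : ℕ) (hN : n < N) (hM : m < M) (ε : ℝ) (j : ℕ) :
    ∑ s ∈ range N ×ˢ range M,
      (if s.1 + s.2 = j then binomPMF n ε s.1 * binomPMF m ε s.2 else 0)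
      = binomPMF (n + m) ε j := by
  rw [Finset.sum_product]
  have hrow : ∀ a ∈ range N,
      ∑ b ∈ range M, (if a + b = j then binomPMF n ε a * binomPMF m ε b else 0)
        = if a ≤ j then binomPMF n ε a * binomPMF m ε (j - a) else 0 := by
    intro a _
    by_cases ha : a ≤ j
    · rw [if_pos ha]
      have hterm : ∀ b ∈ range M,
          (if a + b = j then binomPMF n ε a * binomPMF m ε b else 0)
            = if b = j - a then binomPMF n ε a * binomPMF m ε (j - a) else 0 := by
        intro b _
        by_cases hb : b = j - a
        · subst hb; rw [if_pos (by omega), if_pos rfl]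
        · rw [if_neg (by omega), if_neg hb]
      rw [Finset.sum_congr rfl hterm, Finset.sum_ite_eq' (range M) (j - a)]
      by_cases hmem : j - a ∈ range M
      · rw [if_pos hmem]
      · rw [if_neg hmem]
        rw [mem_range] at hmem
        rw [binomPMF_of_gt (show m < j - a by omega), mul_zero]
    · rw [if_neg ha]
      refine Finset.sum_eq_zero fun b _ => ?_
      rw [if_neg (by omega)]
  rw [Finset.sum_congr rfl hrow]
  have h1 : ∑ a ∈ range N, (if a ≤ j then binomPMF n ε a * binomPMF m ε (j - a) else 0)
      = ∑ a ∈ range (N + j + 1), (if a ≤ j then binomPMF n ε a * binomPMF m ε (j - a) else 0) := by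
    refine Finset.sum_subset ?_ ?_
    · intro k hk; rw [mem_range] at *; omega
    · intro k hk hk2; rw [mem_range] at hk hk2
      by_cases hkj : k ≤ j
      · rw [if_pos hkj, binomPMF_of_gt (show n < k by omega), zero_mul]
      · rw [if_neg hkj]
  have h2 : ∑ a ∈ range (N + j + 1), (if a ≤ j then binomPMF n ε a * binomPMF m ε (j - a) else 0)
      = ∑ a ∈ range (j + 1), binomPMF n ε a * binomPMF m ε (j - a) := by
    have hs : ∑ a ∈ range (N + j + 1), (if a ≤ j then binomPMF n ε a * binomPMF m ε (j - a) else 0)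
        = ∑ a ∈ range (j + 1), (if a ≤ j then binomPMF n ε a * binomPMF m ε (j - a) else 0) := by
      refine (Finset.sum_subset ?_ ?_).symm
      · intro k hk; rw [mem_range] at *; omega
      · intro k _ hk2; rw [mem_range] at hk2
        rw [if_neg (by omega)]
    rw [hs]
    refine Finset.sum_congr rfl fun a ha => ?_
    rw [mem_range] at ha
    rw [if_pos (by omega)]
  rw [h1, h2, binomPMF_vandermonde]

lemma binom_conv_f (n m N M : ℕ) (hN : n < N) (hM : m < M) (ε : ℝ) (f : ℕ → ℝ) :
    ∑ s ∈ range N ×ˢ range M, binomPMF n ε s.1 * binomPMF m ε s.2 * f (s.1 + s.2)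
      = ∑ j ∈ range (n + m + 1), binomPMF (n + m) ε j * f j := by
  have hterm : ∀ s ∈ range N ×ˢ range M,
      binomPMF n ε s.1 * binomPMF m ε s.2 * f (s.1 + s.2)
        = ∑ j ∈ range (n + m + 1),
            (if s.1 + s.2 = j then binomPMF n ε s.1 * binomPMF m ε s.2 else 0) * f j := by
    intro s _
    by_cases hs : s.1 ≤ n ∧ s.2 ≤ m
    · have hmem : s.1 + s.2 ∈ range (n + m + 1) := by rw [mem_range]; omega
      have : ∀ j ∈ range (n + m + 1),
          (if s.1 + s.2 = j then binomPMF n ε s.1 * binomPMF m ε s.2 else 0) * f j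
            = if s.1 + s.2 = j then binomPMF n ε s.1 * binomPMF m ε s.2 * f (s.1 + s.2) else 0 := by
        intro j _
        by_cases hj : s.1 + s.2 = j
        · rw [if_pos hj, if_pos hj, hj]
        · rw [if_neg hj, if_neg hj, zero_mul]
      rw [Finset.sum_congr rfl this, Finset.sum_ite_eq (range (n + m + 1)) (s.1 + s.2), if_pos hmem]
    · have hz : binomPMF n ε s.1 * binomPMF m ε s.2 = 0 := by
        rcases not_and_or.mp hs with h | h
        · rw [binomPMF_of_gt (show n < s.1 by omega), zero_mul]
        · rw [binomPMF_of_gt (show m < s.2 by omega), mul_zero]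
      rw [hz, zero_mul]
      refine (Finset.sum_eq_zero fun j _ => ?_).symm
      by_cases hj : s.1 + s.2 = j
      · simp [hj, hz]
      · simp [hj]
  rw [Finset.sum_congr rfl hterm, Finset.sum_comm]
  refine Finset.sum_congr rfl fun j _ => ?_
  rw [← Finset.sum_mul, binom_conv_sum n m N M hN hM ε j]

lemma cstep_f_sum (q c : ℝ) (x h t : ℕ) (s' : ℕ × ℕ) (h1 : s'.1 ≤ x + t) (h2 : s'.2 ≤ h)
    (f : ℕ → ℝ) :
    ∑ s ∈ range (x + t + 2) ×ˢ range (h + 1), cstep q c s' s * f (s.1 + s.2)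
      = ∑ j ∈ range (s'.1 + s'.2 + 2), stepFn q c (s'.1 + s'.2) j * f j := by
  have hsplit : ∀ s ∈ range (x + t + 2) ×ˢ range (h + 1),
      cstep q c s' s * f (s.1 + s.2)
        = (if s = (s'.1 + 1, s'.2) then q * f (s'.1 + 1 + s'.2) else 0)
          + (1 - q) * (binomPMF s'.1 (1 - c) s.1 * binomPMF s'.2 (1 - c) s.2 * f (s.1 + s.2)) := by
    intro s _
    unfold cstep
    have hup : (if s = (s'.1 + 1, s'.2) then q else 0) * f (s.1 + s.2)
        = if s = (s'.1 + 1, s'.2) then q * f (s'.1 + 1 + s'.2) else 0 := by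
      by_cases e : s = (s'.1 + 1, s'.2)
      · rw [if_pos e, if_pos e, e]
      · rw [if_neg e, if_neg e, zero_mul]
    calc ((if s = (s'.1 + 1, s'.2) then q else 0)
          + (1 - q) * binomPMF s'.1 (1 - c) s.1 * binomPMF s'.2 (1 - c) s.2) * f (s.1 + s.2)
        = (if s = (s'.1 + 1, s'.2) then q else 0) * f (s.1 + s.2)
          + (1 - q) * (binomPMF s'.1 (1 - c) s.1 * binomPMF s'.2 (1 - c) s.2 * f (s.1 + s.2)) := by
          ring
      _ = _ := by rw [hup]
  rw [Finset.sum_congr rfl hsplit, Finset.sum_add_distrib]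
  have hup2 : ∑ s ∈ range (x + t + 2) ×ˢ range (h + 1),
      (if s = (s'.1 + 1, s'.2) then q * f (s'.1 + 1 + s'.2) else 0) = q * f (s'.1 + 1 + s'.2) := by
    rw [Finset.sum_ite_eq' (range (x + t + 2) ×ˢ range (h + 1)) ((s'.1 + 1, s'.2) : ℕ × ℕ)]
    rw [if_pos]
    rw [Finset.mem_product, mem_range, mem_range]
    constructor <;> omega
  rw [hup2, ← Finset.mul_sum,
    binom_conv_f s'.1 s'.2 (x + t + 2) (h + 1) (by omega) (by omega) (1 - c) f]
  have hrhs : ∀ j ∈ range (s'.1 + s'.2 + 2),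
      stepFn q c (s'.1 + s'.2) j * f j
        = (if j = s'.1 + s'.2 + 1 then q * f (s'.1 + 1 + s'.2) else 0)
          + (1 - q) * (binomPMF (s'.1 + s'.2) (1 - c) j * f j) := by
    intro j _
    rw [stepFn_eq]
    have : s'.1 + 1 + s'.2 = s'.1 + s'.2 + 1 := by omega
    rw [this]
    by_cases e : j = s'.1 + s'.2 + 1
    · rw [if_pos e, if_pos e, e]; ring
    · rw [if_neg e, if_neg e]; ring
  have hlast : ∑ j ∈ range (s'.1 + s'.2 + 2), binomPMF (s'.1 + s'.2) (1 - c) j * f j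
      = ∑ j ∈ range (s'.1 + s'.2 + 1), binomPMF (s'.1 + s'.2) (1 - c) j * f j := by
    rw [Finset.sum_range_succ, binomPMF_of_gt (show s'.1 + s'.2 < s'.1 + s'.2 + 1 by omega),
      zero_mul, add_zero]
  rw [Finset.sum_congr rfl hrhs, Finset.sum_add_distrib,
    Finset.sum_ite_eq' (range (s'.1 + s'.2 + 2)) (s'.1 + s'.2 + 1), if_pos (by rw [mem_range]; omega),
    ← Finset.mul_sum, hlast]

lemma jlaw_marg2 (q c : ℝ) (x h : ℕ) :
    ∀ t (f : ℕ → ℝ),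
      ∑ s ∈ range (x + t + 1) ×ˢ range (h + 1), jlaw q c x h t s * f (s.1 + s.2)
        = ∑ i ∈ range (x + h + t + 1), law q c (x + h) t i * f i := by
  intro t
  induction t with
  | zero =>
    intro f
    have hterm : ∀ s ∈ range (x + 0 + 1) ×ˢ range (h + 1),
        jlaw q c x h 0 s * f (s.1 + s.2) = if s = (x, h) then f (x + h) else 0 := by
      intro s _
      show (if s = (x, h) then (1:ℝ) else 0) * f (s.1 + s.2) = _
      by_cases e : s = (x, h)
      · rw [if_pos e, if_pos e, one_mul, e]
      · rw [if_neg e, if_neg e, zero_mul]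
    rw [Finset.sum_congr rfl hterm,
      Finset.sum_ite_eq' (range (x + 0 + 1) ×ˢ range (h + 1)) ((x, h) : ℕ × ℕ), if_pos]
    · have hterm2 : ∀ i ∈ range (x + h + 0 + 1),
          law q c (x + h) 0 i * f i = if i = x + h then f (x + h) else 0 := by
        intro i _
        show (if i = x + h then (1:ℝ) else 0) * f i = _
        by_cases e : i = x + h
        · rw [if_pos e, if_pos e, one_mul, e]
        · rw [if_neg e, if_neg e, zero_mul]
      rw [Finset.sum_congr rfl hterm2,
        Finset.sum_ite_eq' (range (x + h + 0 + 1)) (x + h), if_pos (by rw [mem_range]; omega)]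
    · rw [Finset.mem_product, mem_range, mem_range]; constructor <;> omega
  | succ t ih =>
    intro f
    have hterm : ∀ s ∈ range (x + (t + 1) + 1) ×ˢ range (h + 1),
        jlaw q c x h (t + 1) s * f (s.1 + s.2)
          = ∑ s' ∈ range (x + t + 1) ×ˢ range (h + 1),
              jlaw q c x h t s' * cstep q c s' s * f (s.1 + s.2) := by
      intro s _
      rw [jlaw_succ_sum, Finset.sum_mul]
    rw [Finset.sum_congr rfl hterm, Finset.sum_comm]
    have hinner : ∀ s' ∈ range (x + t + 1) ×ˢ range (h + 1),
        ∑ s ∈ range (x + (t + 1) + 1) ×ˢ range (h + 1),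
            jlaw q c x h t s' * cstep q c s' s * f (s.1 + s.2)
          = jlaw q c x h t s' * ∑ j ∈ range (s'.1 + s'.2 + 2), stepFn q c (s'.1 + s'.2) j * f j := by
      intro s' hs'
      rw [Finset.mem_product, mem_range, mem_range] at hs'
      have : ∀ s ∈ range (x + (t + 1) + 1) ×ˢ range (h + 1),
          jlaw q c x h t s' * cstep q c s' s * f (s.1 + s.2)
            = jlaw q c x h t s' * (cstep q c s' s * f (s.1 + s.2)) := fun s _ => by ring
      rw [Finset.sum_congr rfl this, ← Finset.mul_sum]
      congr 1
      have he : x + (t + 1) + 1 = x + t + 2 := by omega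
      rw [he]
      exact cstep_f_sum q c x h t s' (by omega) (by omega) f
    rw [Finset.sum_congr rfl hinner]
    rw [ih (fun i => ∑ j ∈ range (i + 2), stepFn q c i j * f j)]
    have hrhs : ∀ i' ∈ range (x + h + (t + 1) + 1),
        law q c (x + h) (t + 1) i' * f i'
          = ∑ i ∈ range (x + h + t + 1), law q c (x + h) t i * (stepFn q c i i' * f i') := by
      intro i' _
      rw [law_succ_sum, Finset.sum_mul]
      exact Finset.sum_congr rfl fun i _ => by ring
    rw [Finset.sum_congr rfl hrhs, Finset.sum_comm]
    refine Finset.sum_congr rfl fun i hi => ?_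
    rw [mem_range] at hi
    rw [← Finset.mul_sum]
    congr 1
    refine Finset.sum_subset ?_ ?_
    · intro j hj; rw [mem_range] at *; omega
    · intro j _ hj2
      rw [mem_range] at hj2
      rw [stepFn_of_gt (by omega), zero_mul]


lemma gamma_nonneg {q c : ℝ} (hq0 : 0 ≤ q) (hq1 : q ≤ 1) (hc0 : 0 ≤ c) (hc1 : c ≤ 1) (h : ℕ) :
    0 ≤ 1 - (1 - q) * c ^ h := by
  have h1 : c ^ h ≤ 1 := pow_le_one₀ hc0 hc1
  have h2 : (0:ℝ) ≤ c ^ h := pow_nonneg hc0 h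
  nlinarith [mul_le_one₀ (show (1:ℝ) - q ≤ 1 by linarith) h2 h1]

lemma jlaw_surv {q c : ℝ} (hq0 : 0 ≤ q) (hq1 : q ≤ 1) (hc0 : 0 ≤ c) (hc1 : c ≤ 1) (x h : ℕ) :
    ∀ t, ∑ s ∈ range (x + t + 1) ×ˢ range (h + 1), (if s.2 = 0 then 0 else jlaw q c x h t s)
      ≤ (1 - (1 - q) * c ^ h) ^ t := by
  set γ : ℝ := 1 - (1 - q) * c ^ h with hγ
  have hγ0 : 0 ≤ γ := gamma_nonneg hq0 hq1 hc0 hc1 h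
  intro t
  induction t with
  | zero =>
    rw [pow_zero]
    have hterm : ∀ s ∈ range (x + 0 + 1) ×ˢ range (h + 1),
        (if s.2 = 0 then (0:ℝ) else jlaw q c x h 0 s) ≤ if s = (x, h) then 1 else 0 := by
      intro s _
      by_cases hs : s.2 = 0
      · rw [if_pos hs]
        by_cases he : s = (x, h) <;> simp [he]
      · rw [if_neg hs]
        show jlaw q c x h 0 s ≤ _
        rw [show jlaw q c x h 0 s = if s = (x, h) then 1 else 0 from rfl]
    calc ∑ s ∈ range (x + 0 + 1) ×ˢ range (h + 1), (if s.2 = 0 then (0:ℝ) else jlaw q c x h 0 s)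
        ≤ ∑ s ∈ range (x + 0 + 1) ×ˢ range (h + 1), (if s = (x, h) then (1:ℝ) else 0) :=
          Finset.sum_le_sum hterm
      _ ≤ 1 := by
          rw [Finset.sum_ite_eq' (range (x + 0 + 1) ×ˢ range (h + 1)) ((x, h) : ℕ × ℕ)]
          by_cases hm : ((x, h) : ℕ × ℕ) ∈ range (x + 0 + 1) ×ˢ range (h + 1) <;> simp [hm]
  | succ t ih =>
    have hterm : ∀ s ∈ range (x + (t + 1) + 1) ×ˢ range (h + 1),
        (if s.2 = 0 then (0:ℝ) else jlaw q c x h (t + 1) s)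
          = ∑ s' ∈ range (x + t + 1) ×ˢ range (h + 1),
              jlaw q c x h t s' * (if s.2 = 0 then 0 else cstep q c s' s) := by
      intro s _
      by_cases hs : s.2 = 0
      · rw [if_pos hs]
        refine (Finset.sum_eq_zero fun s' _ => ?_).symm
        rw [if_pos hs, mul_zero]
      · rw [if_neg hs, jlaw_succ_sum]
        exact Finset.sum_congr rfl fun s' _ => by rw [if_neg hs]
    rw [Finset.sum_congr rfl hterm, Finset.sum_comm]
    have hK : ∀ s' ∈ range (x + t + 1) ×ˢ range (h + 1),
        ∑ s ∈ range (x + (t + 1) + 1) ×ˢ range (h + 1),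
            jlaw q c x h t s' * (if s.2 = 0 then 0 else cstep q c s' s)
          ≤ (if s'.2 = 0 then 0 else jlaw q c x h t s') * γ := by
      intro s' hs'
      rw [Finset.mem_product, mem_range, mem_range] at hs'
      by_cases hz : s'.2 = 0
      · rw [if_pos hz]
        have hzz : ∀ s ∈ range (x + (t + 1) + 1) ×ˢ range (h + 1),
            jlaw q c x h t s' * (if s.2 = 0 then 0 else cstep q c s' s) = 0 := by
          intro s _
          by_cases hs : s.2 = 0
          · rw [if_pos hs, mul_zero]
          · rw [if_neg hs]
            have hcs : cstep q c s' s = 0 := by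
              unfold cstep
              rw [if_neg (by intro he; rw [he] at hs; exact hs hz)]
              rw [binomPMF_of_gt (show s'.2 < s.2 by omega)]
              ring
            rw [hcs, mul_zero]
        rw [Finset.sum_eq_zero hzz, zero_mul]
      · rw [if_neg hz, ← Finset.mul_sum]
        have hjn : 0 ≤ jlaw q c x h t s' := jlaw_nonneg hq0 hq1 hc0 hc1 x h t s'
        refine mul_le_mul_of_nonneg_left ?_ hjn
        have hsplit : ∀ s ∈ range (x + (t + 1) + 1) ×ˢ range (h + 1),
            (if s.2 = 0 then (0:ℝ) else cstep q c s' s)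
              = (if s = (s'.1 + 1, s'.2) then q else 0)
                + (1 - q) * binomPMF s'.1 (1 - c) s.1 *
                    (if s.2 = 0 then 0 else binomPMF s'.2 (1 - c) s.2) := by
          intro s _
          by_cases hs : s.2 = 0
          · rw [if_pos hs, if_pos hs, if_neg (by intro he; rw [he] at hs; exact hz hs), mul_zero]
            ring
          · rw [if_neg hs, if_neg hs]
            rfl
        rw [Finset.sum_congr rfl hsplit, Finset.sum_add_distrib]
        have hup : ∑ s ∈ range (x + (t + 1) + 1) ×ˢ range (h + 1),
            (if s = (s'.1 + 1, s'.2) then q else 0) = q := by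
          rw [Finset.sum_ite_eq' (range (x + (t + 1) + 1) ×ˢ range (h + 1)) ((s'.1 + 1, s'.2) : ℕ × ℕ)]
          rw [if_pos]
          rw [Finset.mem_product, mem_range, mem_range]
          constructor <;> omega
        rw [hup]
        have hcat : ∑ s ∈ range (x + (t + 1) + 1) ×ˢ range (h + 1),
            (1 - q) * binomPMF s'.1 (1 - c) s.1 * (if s.2 = 0 then 0 else binomPMF s'.2 (1 - c) s.2)
              = (1 - q) * (1 - c ^ s'.2) := by
          rw [Finset.sum_product]
          have hrow : ∀ a ∈ range (x + (t + 1) + 1),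
              ∑ b ∈ range (h + 1),
                  (1 - q) * binomPMF s'.1 (1 - c) a * (if b = 0 then 0 else binomPMF s'.2 (1 - c) b)
                = (1 - q) * (1 - c ^ s'.2) * binomPMF s'.1 (1 - c) a := by
            intro a _
            rw [← Finset.mul_sum]
            have h1 : ∑ b ∈ range (h + 1), (if b = 0 then (0:ℝ) else binomPMF s'.2 (1 - c) b)
                = ∑ b ∈ range (h + 1), binomPMF s'.2 (1 - c) b - binomPMF s'.2 (1 - c) 0 := by
              have h1a : ∀ b ∈ range (h + 1), (if b = 0 then (0:ℝ) else binomPMF s'.2 (1 - c) b)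
                  = binomPMF s'.2 (1 - c) b - (if b = 0 then binomPMF s'.2 (1 - c) 0 else 0) := by
                intro b _
                by_cases hb : b = 0
                · subst hb; simp
                · simp [hb]
              rw [Finset.sum_congr rfl h1a, Finset.sum_sub_distrib,
                Finset.sum_ite_eq' (range (h + 1)) 0, if_pos (by simp)]
            have h2 : ∑ b ∈ range (h + 1), binomPMF s'.2 (1 - c) b
                = ∑ b ∈ range (s'.2 + 1), binomPMF s'.2 (1 - c) b := by
              refine (Finset.sum_subset ?_ ?_).symm
              · intro k hk; rw [mem_range] at *; omega
              · intro k _ hk2; rw [mem_range] at hk2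
                exact binomPMF_of_gt (by omega)
            rw [h1, h2, sum_binomPMF, binomPMF_zero]
            ring_nf
          rw [Finset.sum_congr rfl hrow, ← Finset.mul_sum]
          have h3 : ∑ a ∈ range (x + (t + 1) + 1), binomPMF s'.1 (1 - c) a
              = ∑ a ∈ range (s'.1 + 1), binomPMF s'.1 (1 - c) a := by
            refine (Finset.sum_subset ?_ ?_).symm
            · intro k hk; rw [mem_range] at *; omega
            · intro k _ hk2; rw [mem_range] at hk2
              exact binomPMF_of_gt (by omega)
          rw [h3, sum_binomPMF, mul_one]
        rw [hcat]
        have hpow : c ^ h ≤ c ^ s'.2 := pow_le_pow_of_le_one hc0 hc1 (by omega)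
        rw [hγ]
        nlinarith
    calc ∑ s' ∈ range (x + t + 1) ×ˢ range (h + 1),
          ∑ s ∈ range (x + (t + 1) + 1) ×ˢ range (h + 1),
            jlaw q c x h t s' * (if s.2 = 0 then 0 else cstep q c s' s)
        ≤ ∑ s' ∈ range (x + t + 1) ×ˢ range (h + 1),
            (if s'.2 = 0 then 0 else jlaw q c x h t s') * γ := Finset.sum_le_sum hK
      _ = (∑ s' ∈ range (x + t + 1) ×ˢ range (h + 1),
            (if s'.2 = 0 then 0 else jlaw q c x h t s')) * γ := by rw [Finset.sum_mul]
      _ ≤ γ ^ t * γ := mul_le_mul_of_nonneg_right ih hγ0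
      _ = γ ^ (t + 1) := by rw [pow_succ]

lemma jlaw_marg1_grid (q c : ℝ) (x h t u : ℕ) :
    ∑ s ∈ range (x + t + 1) ×ˢ range (h + 1), jlaw q c x h t s * (if s.1 = u then 1 else 0)
      = law q c x t u := by
  rw [Finset.sum_product]
  have hrow : ∀ a ∈ range (x + t + 1),
      ∑ b ∈ range (h + 1), jlaw q c x h t (a, b) * (if a = u then (1:ℝ) else 0)
        = if a = u then law q c x t a else 0 := by
    intro a _
    by_cases ha : a = u
    · subst ha
      simp only [eq_self_iff_true, if_true, mul_one]
      exact jlaw_marg1 q c x h t a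
    · rw [if_neg ha]
      simp only [if_neg ha, mul_zero]
      exact Finset.sum_const_zero
  rw [Finset.sum_congr rfl hrow, Finset.sum_ite_eq' (range (x + t + 1)) u]
  by_cases hm : u ∈ range (x + t + 1)
  · rw [if_pos hm]
  · rw [if_neg hm]
    rw [mem_range] at hm
    exact (law_eq_zero_of_gt q c x t u (by omega)).symm

lemma jlaw_marg2_grid (q c : ℝ) (x h t u : ℕ) :
    ∑ s ∈ range (x + t + 1) ×ˢ range (h + 1), jlaw q c x h t s * (if s.1 + s.2 = u then 1 else 0)
      = law q c (x + h) t u := by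
  rw [jlaw_marg2 q c x h t (fun i => if i = u then (1:ℝ) else 0)]
  have hterm : ∀ i ∈ range (x + h + t + 1),
      law q c (x + h) t i * (if i = u then (1:ℝ) else 0)
        = if i = u then law q c (x + h) t u else 0 := by
    intro i _
    by_cases hi : i = u
    · subst hi; simp
    · simp [hi]
  rw [Finset.sum_congr rfl hterm, Finset.sum_ite_eq' (range (x + h + t + 1)) u]
  by_cases hm : u ∈ range (x + h + t + 1)
  · rw [if_pos hm]
  · rw [if_neg hm]
    rw [mem_range] at hm
    exact (law_eq_zero_of_gt q c (x + h) t u (by omega)).symm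

lemma coup_bound {q c : ℝ} (hq0 : 0 ≤ q) (hq1 : q ≤ 1) (hc0 : 0 ≤ c) (hc1 : c ≤ 1)
    (x h t u : ℕ) :
    |law q c x t u - law q c (x + h) t u| ≤ (1 - (1 - q) * c ^ h) ^ t := by
  set R := range (x + t + 1) ×ˢ range (h + 1) with hR
  set S := ∑ s ∈ R, (if s.2 = 0 then (0:ℝ) else jlaw q c x h t s) with hS
  have hSle : S ≤ (1 - (1 - q) * c ^ h) ^ t := jlaw_surv hq0 hq1 hc0 hc1 x h t
  set A := ∑ s ∈ R, (if s.2 = 0 then (0:ℝ) else jlaw q c x h t s * (if s.1 = u then 1 else 0))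
    with hA
  set B := ∑ s ∈ R, (if s.2 = 0 then (0:ℝ) else jlaw q c x h t s * (if s.1 + s.2 = u then 1 else 0))
    with hB
  have hdiff : law q c x t u - law q c (x + h) t u = A - B := by
    rw [← jlaw_marg1_grid q c x h t u, ← jlaw_marg2_grid q c x h t u, hA, hB,
      ← Finset.sum_sub_distrib, ← Finset.sum_sub_distrib]
    refine Finset.sum_congr rfl fun s _ => ?_
    by_cases hs : s.2 = 0
    · rw [if_pos hs, if_pos hs, hs]
      have : s.1 + 0 = s.1 := by omega
      rw [this, sub_self, sub_self]
    · rw [if_neg hs, if_neg hs]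
  have hnn : ∀ s ∈ R, 0 ≤ jlaw q c x h t s := fun s _ => jlaw_nonneg hq0 hq1 hc0 hc1 x h t s
  have hA0 : 0 ≤ A := Finset.sum_nonneg fun s hs => by
    by_cases h2 : s.2 = 0
    · rw [if_pos h2]
    · rw [if_neg h2]
      by_cases h3 : s.1 = u <;> simp [h3, hnn s hs]
  have hB0 : 0 ≤ B := Finset.sum_nonneg fun s hs => by
    by_cases h2 : s.2 = 0
    · rw [if_pos h2]
    · rw [if_neg h2]
      by_cases h3 : s.1 + s.2 = u <;> simp [h3, hnn s hs]
  have hAS : A ≤ S := Finset.sum_le_sum fun s hs => by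
    by_cases h2 : s.2 = 0
    · rw [if_pos h2, if_pos h2]
    · rw [if_neg h2, if_neg h2]
      by_cases h3 : s.1 = u <;> simp [h3, hnn s hs]
  have hBS : B ≤ S := Finset.sum_le_sum fun s hs => by
    by_cases h2 : s.2 = 0
    · rw [if_pos h2, if_pos h2]
    · rw [if_neg h2, if_neg h2]
      by_cases h3 : s.1 + s.2 = u <;> simp [h3, hnn s hs]
  rw [hdiff, abs_le]
  constructor <;> linarith

lemma law_diff_bound {q c : ℝ} (hq0 : 0 ≤ q) (hq1 : q ≤ 1) (hc0 : 0 ≤ c) (hc1 : c ≤ 1)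
    (x y t u : ℕ) :
    |law q c x t u - law q c y t u| ≤ (1 - (1 - q) * c ^ (x + y)) ^ t := by
  have key : ∀ a b : ℕ, a ≤ b →
      |law q c a t u - law q c b t u| ≤ (1 - (1 - q) * c ^ (a + b)) ^ t := by
    intro a b hab
    obtain ⟨d, rfl⟩ : ∃ d, b = a + d := ⟨b - a, by omega⟩
    have h1 := coup_bound hq0 hq1 hc0 hc1 a d t u
    refine h1.trans (pow_le_pow_left₀ (gamma_nonneg hq0 hq1 hc0 hc1 d) ?_ t)
    have hpow : c ^ (a + (a + d)) ≤ c ^ d := pow_le_pow_of_le_one hc0 hc1 (by omega)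
    nlinarith
  rcases le_total x y with hxy | hxy
  · exact key x y hxy
  · have := key y x hxy
    rw [abs_sub_comm] at this
    have he : y + x = x + y := by omega
    rw [he] at this
    exact this


section erg
variable {q c : ℝ} {piT : ℕ → ℝ}

lemma summable_piT (hpi1 : ∑' k, piT k = 1) : Summable piT := by
  by_contra hns
  rw [tsum_eq_zero_of_not_summable hns] at hpi1
  norm_num at hpi1

lemma pi_invariant (hq0 : 0 ≤ q) (hq1 : q ≤ 1) (hc0 : 0 ≤ c) (hc1 : c ≤ 1)
    (hpi0 : ∀ k, 0 ≤ piT k) (hpisum : Summable piT)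
    (hpis : ∀ j, ∑' i, piT i * stepFn q c i j = piT j) :
    ∀ t u, ∑' i, piT i * law q c i t u = piT u := by
  intro t
  induction t with
  | zero =>
    intro u
    rw [tsum_eq_single u]
    · show piT u * (if u = u then (1:ℝ) else 0) = piT u
      rw [if_pos rfl, mul_one]
    · intro i hi
      show piT i * (if u = i then (1:ℝ) else 0) = 0
      rw [if_neg (fun he => hi he.symm), mul_zero]
  | succ t ih =>
    intro u
    set F : ℕ → ℕ → ℝ := fun i k => piT i * law q c i t k * stepFn q c k u with hF
    have hFnn : 0 ≤ Function.uncurry F := by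
      intro ik
      exact mul_nonneg (mul_nonneg (hpi0 _) (law_nonneg hq0 hq1 hc0 hc1 _ t _))
        (stepFn_nonneg hq0 hq1 hc0 hc1 _ u)
    have hrow_sum : ∀ i, Summable fun k => F i k := by
      intro i
      refine summable_of_ne_finset_zero (s := range (i + t + 1)) fun k hk => ?_
      rw [mem_range] at hk
      show piT i * law q c i t k * stepFn q c k u = 0
      rw [law_eq_zero_of_gt q c i t k (by omega), mul_zero, zero_mul]
    have hrow_val : ∀ i, ∑' k, F i k = piT i * law q c i (t + 1) u := by
      intro i
      show ∑' k, piT i * law q c i t k * stepFn q c k u = _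
      have : ∀ k : ℕ, piT i * law q c i t k * stepFn q c k u
          = piT i * (law q c i t k * stepFn q c k u) := fun k => by ring
      rw [tsum_congr this, tsum_mul_left]
      rfl
    have hrow_le : ∀ i, ∑' k, F i k ≤ piT i := by
      intro i
      rw [hrow_val i]
      have h1 : law q c i (t + 1) u ≤ 1 := law_le_one hq0 hq1 hc0 hc1 i (t + 1) u
      nlinarith [hpi0 i, law_nonneg hq0 hq1 hc0 hc1 i (t + 1) u]
    have hsum_rows : Summable fun i => ∑' k, F i k := by
      refine Summable.of_nonneg_of_le (fun i => tsum_nonneg fun k => hFnn (i, k))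
        hrow_le hpisum
    have hFsum : Summable (Function.uncurry F) :=
      (summable_prod_of_nonneg hFnn).mpr ⟨hrow_sum, hsum_rows⟩
    have hcol_sum : ∀ k, Summable fun i => F i k := by
      intro k
      refine Summable.of_nonneg_of_le (fun i => hFnn (i, k)) (fun i => ?_)
        (hpisum.mul_right (stepFn q c k u))
      show piT i * law q c i t k * stepFn q c k u ≤ piT i * stepFn q c k u
      have h1 : law q c i t k ≤ 1 := law_le_one hq0 hq1 hc0 hc1 i t k
      nlinarith [mul_nonneg (mul_nonneg (hpi0 i) (stepFn_nonneg hq0 hq1 hc0 hc1 k u))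
        (sub_nonneg.mpr h1)]
    have hswap : ∑' i, ∑' k, F i k = ∑' k, ∑' i, F i k :=
      (hFsum.tsum_comm' hrow_sum hcol_sum).symm
    calc ∑' i, piT i * law q c i (t + 1) u
        = ∑' i, ∑' k, F i k := by
          refine tsum_congr fun i => (hrow_val i).symm
      _ = ∑' k, ∑' i, F i k := hswap
      _ = ∑' k, (∑' i, piT i * law q c i t k) * stepFn q c k u := by
          refine tsum_congr fun k => ?_
          rw [← tsum_mul_right]
      _ = ∑' k, piT k * stepFn q c k u := by
          refine tsum_congr fun k => ?_
          rw [ih k]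
      _ = piT u := hpis u

lemma ergodic_law (hq0 : 0 < q) (hq1 : q < 1) (hc0 : 0 < c) (hc1 : c ≤ 1)
    (hpi0 : ∀ k, 0 ≤ piT k) (hpi1 : ∑' k, piT k = 1)
    (hpis : ∀ j, ∑' i, piT i * stepFn q c i j = piT j) (x u : ℕ) :
    Tendsto (fun t => law q c x t u) atTop (nhds (piT u)) := by
  have hq0' : 0 ≤ q := le_of_lt hq0
  have hq1' : q ≤ 1 := le_of_lt hq1
  have hc0' : 0 ≤ c := le_of_lt hc0
  have hpisum : Summable piT := summable_piT hpi1
  have hinv := pi_invariant hq0' hq1' hc0' hc1 hpi0 hpisum hpis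
  have hsum2 : ∀ t, Summable fun i => piT i * law q c i t u := by
    intro t
    refine Summable.of_nonneg_of_le
      (fun i => mul_nonneg (hpi0 i) (law_nonneg hq0' hq1' hc0' hc1 i t u))
      (fun i => ?_) hpisum
    have h1 : law q c i t u ≤ 1 := law_le_one hq0' hq1' hc0' hc1 i t u
    nlinarith [hpi0 i, law_nonneg hq0' hq1' hc0' hc1 i t u]
  have heq : ∀ t, law q c x t u - piT u = ∑' i, piT i * (law q c x t u - law q c i t u) := by
    intro t
    have h1 : ∀ i : ℕ, piT i * (law q c x t u - law q c i t u)
        = piT i * law q c x t u - piT i * law q c i t u := fun i => by ring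
    rw [tsum_congr h1, Summable.tsum_sub (hpisum.mul_right _) (hsum2 t), tsum_mul_right, hpi1, hinv t u,
      one_mul]
  have hten : Tendsto (fun t => ∑' i, piT i * (law q c x t u - law q c i t u)) atTop
      (nhds (∑' _ : ℕ, (0:ℝ))) := by
    refine tendsto_tsum_of_dominated_convergence (bound := fun i => 2 * piT i)
      (hpisum.mul_left 2) (fun i => ?_) ?_
    · -- pointwise convergence to 0
      have hbase0 : 0 ≤ 1 - (1 - q) * c ^ (x + i) := gamma_nonneg hq0' hq1' hc0' hc1 (x + i)
      have hbase1 : 1 - (1 - q) * c ^ (x + i) < 1 := by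
        have h2 : 0 < c ^ (x + i) := pow_pos hc0 (x + i)
        nlinarith
      have hpow : Tendsto (fun t : ℕ => (1 - (1 - q) * c ^ (x + i)) ^ t) atTop (nhds 0) :=
        tendsto_pow_atTop_nhds_zero_of_lt_one hbase0 hbase1
      refine squeeze_zero_norm (fun t => ?_) (by simpa using hpow.const_mul (piT i))
      show |piT i * (law q c x t u - law q c i t u)| ≤ piT i * (1 - (1 - q) * c ^ (x + i)) ^ t
      rw [abs_mul, abs_of_nonneg (hpi0 i)]
      exact mul_le_mul_of_nonneg_left (law_diff_bound hq0' hq1' hc0' hc1 x i t u) (hpi0 i)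
    · refine Filter.Eventually.of_forall fun t i => ?_
      show |piT i * (law q c x t u - law q c i t u)| ≤ 2 * piT i
      rw [abs_mul, abs_of_nonneg (hpi0 i)]
      have h2 : |law q c x t u - law q c i t u| ≤ 2 := by
        have := law_le_one hq0' hq1' hc0' hc1 x t u
        have := law_le_one hq0' hq1' hc0' hc1 i t u
        have := law_nonneg hq0' hq1' hc0' hc1 x t u
        have := law_nonneg hq0' hq1' hc0' hc1 i t u
        rw [abs_le]; constructor <;> linarith
      nlinarith [hpi0 i]
  rw [tsum_zero] at hten
  have hten2 : Tendsto (fun t => law q c x t u - piT u) atTop (nhds 0) := by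
    refine hten.congr fun t => (heq t).symm
  have := hten2.add_const (piT u)
  simpa using this



lemma c_eq_one_contra (p : ℝ) (hp : p ∈ Set.Ioo (0 : ℝ) 1)
    (piT : ℕ → ℝ) (hpi1 : ∑' k, piT k = 1)
    (hpis : ∀ j, ∑' i, piT i * stepFn (p / (1 - 1 * (1 - p))) 1 i j = piT j) : False := by
  have hq : p / (1 - 1 * (1 - p)) = 1 := by
    have : 1 - 1 * (1 - p) = p := by ring
    rw [this, div_self (ne_of_gt hp.1)]
  have hstep : ∀ i j : ℕ, stepFn (p / (1 - 1 * (1 - p))) 1 i j = if j = i + 1 then 1 else 0 := by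
    intro i j
    rw [stepFn_eq, hq]
    norm_num
  have hzero : ∀ j, piT j = 0 := by
    intro j
    induction j with
    | zero =>
      rw [← hpis 0]
      have : ∀ i : ℕ, piT i * stepFn (p / (1 - 1 * (1 - p))) 1 i 0 = 0 := by
        intro i
        rw [hstep i 0, if_neg (by omega), mul_zero]
      rw [tsum_congr this, tsum_zero]
    | succ j ih =>
      rw [← hpis (j + 1)]
      have hsingle : ∀ i : ℕ, i ≠ j → piT i * stepFn (p / (1 - 1 * (1 - p))) 1 i (j + 1) = 0 := by
        intro i hi
        rw [hstep i (j + 1), if_neg (by omega), mul_zero]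
      rw [tsum_eq_single j hsingle, hstep j (j + 1), if_pos rfl, mul_one, ih]
  have : ∑' k, piT k = 0 := by
    rw [tsum_congr hzero, tsum_zero]
  rw [this] at hpi1
  norm_num at hpi1

/-- **Theorem 3.7.** Let `α = 1 - c(1-p)`, `p̃ = p/α`, and let `π^{(p̃)}` be the stationary
distribution of the chain with parameters `(p̃, c)`. For `x < y`, the conditional law
`P_{x,y}(X_t ∈ · | ξ > t)` converges in distribution to `π^{(p̃)}` as `t → ∞`. -/
theorem conditioned_coupling_limit
    (p c : ℝ) (hp : p ∈ Set.Ioo (0 : ℝ) 1) (hc : c ∈ Set.Ioc (0 : ℝ) 1)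
    (piT : ℕ → ℝ) (hpi0 : ∀ k, 0 ≤ piT k) (hpi1 : ∑' k, piT k = 1)
    (hpis : ∀ j, ∑' i, piT i * stepFn (p / (1 - c * (1 - p))) c i j = piT j)
    (x y : ℕ) (hxy : x < y) :
    ∀ j : ℕ,
      Tendsto (fun t : ℕ =>
          (∑' h' : ℕ, slaw p c x (y - x) t (j, h')) / (∑' s : ℕ × ℕ, slaw p c x (y - x) t s))
        atTop (nhds (piT j)) := by
  intro j
  obtain ⟨hp0, hp1⟩ := hp
  obtain ⟨hc0, hc1⟩ := hc
  rcases eq_or_lt_of_le hc1 with hceq | hclt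
  · exact absurd (c_eq_one_contra p ⟨hp0, hp1⟩ piT hpi1 (by rw [← hceq] at hpis ⊢; exact hpis))
      (by simp)
  set h0 : ℕ := y - x with hh0def
  have hh0 : h0 ≠ 0 := by omega
  set αf : ℕ → ℝ := fun m => p + (1 - p) * (1 - c) ^ m with hαf
  have hαpos : ∀ m, 0 < αf m := by
    intro m
    have h1 : (0:ℝ) ≤ (1 - p) * (1 - c) ^ m := by
      have h2 : (0:ℝ) ≤ 1 - c := by linarith
      have h3 : (0:ℝ) ≤ 1 - p := by linarith
      positivity
    simp only [hαf]
    linarith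
  have hαle : ∀ m, αf m ≤ 1 := by
    intro m
    have h2 : (0:ℝ) ≤ 1 - c := by linarith
    have h3 : (1 - c) ^ m ≤ 1 := pow_le_one₀ h2 (by linarith)
    have h4 : (1 - p) * (1 - c) ^ m ≤ 1 - p := by nlinarith
    simp only [hαf]; linarith
  have hqm0 : ∀ m, 0 < p / αf m := fun m => div_pos hp0 (hαpos m)
  have hqm1 : ∀ m, p / αf m ≤ 1 := by
    intro m
    rw [div_le_one (hαpos m)]
    have h1 : (0:ℝ) ≤ (1 - p) * (1 - c) ^ m := by
      have h2 : (0:ℝ) ≤ 1 - c := by linarith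
      have h3 : (0:ℝ) ≤ 1 - p := by linarith
      positivity
    simp only [hαf]; linarith
  have hα1 : αf 1 = 1 - c * (1 - p) := by simp only [hαf]; ring
  have hα1lt : ∀ m, 2 ≤ m → αf m < αf 1 := by
    intro m hm
    simp only [hαf]
    have h2 : (0:ℝ) < 1 - c := by linarith
    have h3 : (1 - c) ^ m < (1 - c) ^ 1 := pow_lt_pow_right_of_lt_one₀ h2 (by linarith) (by omega)
    have h4 : (0:ℝ) < 1 - p := by linarith
    nlinarith
  -- define A and B
  set A : ℕ → ℝ := fun t => ∑ m ∈ Icc 1 h0, (-1:ℝ)^(m+1) *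
      ((h0.choose m : ℝ) * (αf m / αf 1) ^ t * law (p / αf m) c x t j) with hA
  set B : ℕ → ℝ := fun t => ∑ m ∈ Icc 1 h0, (-1:ℝ)^(m+1) *
      ((h0.choose m : ℝ) * (αf m / αf 1) ^ t) with hB
  have hα1ne : ∀ t : ℕ, (αf 1) ^ t ≠ 0 := fun t => pow_ne_zero t (ne_of_gt (hαpos 1))
  have hfun : ∀ t, (∑' h' : ℕ, slaw p c x h0 t (j, h')) / (∑' s : ℕ × ℕ, slaw p c x h0 t s)
      = A t / B t := by
    intro t
    rw [num_formula p c hp0 hp1 hc1 x h0 hh0 t j, den_formula p c hp0 hp1 hc1 x h0 hh0 t]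
    have hN : ∑ m ∈ Icc 1 h0, (-1:ℝ)^(m+1) *
        ((h0.choose m : ℝ) * (αf m) ^ t * law (p / αf m) c x t j) = (αf 1) ^ t * A t := by
      rw [hA, Finset.mul_sum]
      refine Finset.sum_congr rfl fun m _ => ?_
      have h1 : (αf m) ^ t = (αf 1) ^ t * (αf m / αf 1) ^ t := by
        rw [div_pow, mul_div_cancel₀ _ (hα1ne t)]
      rw [h1]; ring
    have hD : ∑ m ∈ Icc 1 h0, (-1:ℝ)^(m+1) * ((h0.choose m : ℝ) * (αf m) ^ t)
        = (αf 1) ^ t * B t := by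
      rw [hB, Finset.mul_sum]
      refine Finset.sum_congr rfl fun m _ => ?_
      have h1 : (αf m) ^ t = (αf 1) ^ t * (αf m / αf 1) ^ t := by
        rw [div_pow, mul_div_cancel₀ _ (hα1ne t)]
      rw [h1]; ring
    rw [hN, hD, mul_div_mul_left _ _ (hα1ne t)]
  -- limits of terms
  have hterm_lim : ∀ m ∈ Icc 1 h0,
      Tendsto (fun t => (-1:ℝ)^(m+1) *
          ((h0.choose m : ℝ) * (αf m / αf 1) ^ t * law (p / αf m) c x t j)) atTop
        (nhds (if m = 1 then (h0 : ℝ) * piT j else 0)) := by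
    intro m hm
    rw [mem_Icc] at hm
    by_cases hm1 : m = 1
    · subst hm1
      rw [if_pos rfl]
      have hdiv : αf 1 / αf 1 = 1 := div_self (ne_of_gt (hαpos 1))
      have herg : Tendsto (fun t => law (p / αf 1) c x t j) atTop (nhds (piT j)) := by
        have hq1' : p / αf 1 < 1 := by
          rw [div_lt_one (hαpos 1), hα1]
          nlinarith
        have heq : p / αf 1 = p / (1 - c * (1 - p)) := by rw [hα1]
        rw [heq]
        refine ergodic_law (by rw [← heq]; exact hqm0 1) (by rw [← heq]; exact hq1') hc0 hc1
          hpi0 hpi1 hpis x j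
      have heqfun : ∀ t, (-1:ℝ)^(1+1) * ((h0.choose 1 : ℝ) * (αf 1 / αf 1) ^ t
          * law (p / αf 1) c x t j) = (h0 : ℝ) * law (p / αf 1) c x t j := by
        intro t
        rw [hdiv, one_pow, Nat.choose_one_right]
        ring
      rw [funext heqfun]
      exact herg.const_mul ((h0 : ℝ))
    · rw [if_neg hm1]
      set r : ℝ := αf m / αf 1 with hr
      have hr0 : 0 ≤ r := le_of_lt (div_pos (hαpos m) (hαpos 1))
      have hr1 : r < 1 := by
        rw [hr, div_lt_one (hαpos 1)]
        exact hα1lt m (by omega)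
      have hpow : Tendsto (fun t : ℕ => r ^ t) atTop (nhds 0) :=
        tendsto_pow_atTop_nhds_zero_of_lt_one hr0 hr1
      refine squeeze_zero_norm (fun t => ?_) (by simpa using hpow.const_mul ((h0.choose m : ℝ)))
      have hlawnn := law_nonneg (le_of_lt (hqm0 m)) (hqm1 m) (le_of_lt hc0) hc1 x t j
      have hlawle := law_le_one (le_of_lt (hqm0 m)) (hqm1 m) (le_of_lt hc0) hc1 x t j
      have habs1 : |(-1:ℝ)^(m+1)| = 1 := by rw [abs_pow]; norm_num
      rw [Real.norm_eq_abs, abs_mul, habs1, one_mul, abs_mul, abs_mul,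
        abs_of_nonneg (by positivity : (0:ℝ) ≤ (h0.choose m : ℝ)),
        abs_of_nonneg (pow_nonneg hr0 t), abs_of_nonneg hlawnn]
      calc (h0.choose m : ℝ) * r ^ t * law (p / αf m) c x t j
          ≤ (h0.choose m : ℝ) * r ^ t * 1 := by
            have h5 := pow_nonneg hr0 t
            have h6 : (0:ℝ) ≤ (h0.choose m : ℝ) := by positivity
            nlinarith [mul_nonneg (mul_nonneg h6 h5) (sub_nonneg.mpr hlawle)]
        _ = (h0.choose m : ℝ) * r ^ t := by ring
  have hterm_limB : ∀ m ∈ Icc 1 h0,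
      Tendsto (fun t => (-1:ℝ)^(m+1) * ((h0.choose m : ℝ) * (αf m / αf 1) ^ t)) atTop
        (nhds (if m = 1 then (h0 : ℝ) else 0)) := by
    intro m hm
    rw [mem_Icc] at hm
    by_cases hm1 : m = 1
    · subst hm1
      rw [if_pos rfl]
      have hdiv : αf 1 / αf 1 = 1 := div_self (ne_of_gt (hαpos 1))
      have : ∀ t : ℕ, (-1:ℝ)^(1+1) * ((h0.choose 1 : ℝ) * (αf 1 / αf 1) ^ t) = (h0 : ℝ) := by
        intro t
        rw [hdiv, one_pow, Nat.choose_one_right]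
        ring
      rw [funext this]
      exact tendsto_const_nhds
    · rw [if_neg hm1]
      set r : ℝ := αf m / αf 1 with hr
      have hr0 : 0 ≤ r := le_of_lt (div_pos (hαpos m) (hαpos 1))
      have hr1 : r < 1 := by
        rw [hr, div_lt_one (hαpos 1)]
        exact hα1lt m (by omega)
      have hpow : Tendsto (fun t : ℕ => r ^ t) atTop (nhds 0) :=
        tendsto_pow_atTop_nhds_zero_of_lt_one hr0 hr1
      refine squeeze_zero_norm (fun t => ?_) (by simpa using hpow.const_mul ((h0.choose m : ℝ)))
      have habs1 : |(-1:ℝ)^(m+1)| = 1 := by rw [abs_pow]; norm_num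
      rw [Real.norm_eq_abs, abs_mul, habs1, one_mul, abs_mul,
        abs_of_nonneg (by positivity : (0:ℝ) ≤ (h0.choose m : ℝ)),
        abs_of_nonneg (pow_nonneg hr0 t)]
  have hAlim : Tendsto A atTop (nhds ((h0 : ℝ) * piT j)) := by
    have := tendsto_finset_sum (Icc 1 h0) hterm_lim
    have hsum : ∑ m ∈ Icc 1 h0, (if m = 1 then (h0 : ℝ) * piT j else 0) = (h0 : ℝ) * piT j := by
      rw [Finset.sum_ite_eq' (Icc 1 h0) 1 (fun _ => (h0 : ℝ) * piT j),
        if_pos (by rw [mem_Icc]; omega)]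
    rw [hsum] at this
    exact this
  have hBlim : Tendsto B atTop (nhds ((h0 : ℝ))) := by
    have := tendsto_finset_sum (Icc 1 h0) hterm_limB
    have hsum : ∑ m ∈ Icc 1 h0, (if m = 1 then (h0 : ℝ) else 0) = (h0 : ℝ) := by
      rw [Finset.sum_ite_eq' (Icc 1 h0) 1 (fun _ => (h0 : ℝ)),
        if_pos (by rw [mem_Icc]; omega)]
    rw [hsum] at this
    exact this
  have hh0ne : (h0 : ℝ) ≠ 0 := Nat.cast_ne_zero.mpr hh0
  have hdiv := hAlim.div hBlim hh0ne
  have hval : (h0 : ℝ) * piT j / (h0 : ℝ) = piT j := by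
    field_simp
  rw [hval] at hdiv
  exact hdiv.congr fun t => (hfun t).symm
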